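/- Let k₁ ≥ 2 be an integer and n ≥ 1 an integer. Then for every q ∈ (0,1), ((q-1)/log q) · (q^{n+1}/[n+1:q])^{k₁-1} / (k₁-1) < ζ[k₁ : q]_n < ((q-1)/log q) · (q^n/[n:q])^{k₁-1} / (k₁-1), where ζ[k₁:q]_n = Σ_{m > n} q^{m(k₁-1)}/[m:q]^{k₁}. -/

import Mathlib

open Finset Filter Topology

/-- The q-integer [m:q] = (1-q^m)/(1-q). -/
noncomputable def qint (q : ℝ) (m : ℕ) : ℝ := (1 - q ^ m) / (1 - q)

/-- Tail of the multiple q-zeta value: sum over m₁ > ⋯ > m_d > n. -/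
noncomputable def qZeta {d : ℕ} (q : ℝ) (k : Fin d → ℕ) (n : ℕ) : ℝ :=
  ∑' m : {m : Fin d → ℕ // StrictAnti m ∧ ∀ i, n < m i},
    ∏ i, q ^ (m.1 i * (k i - 1)) / (qint q (m.1 i)) ^ (k i)

/-- The modified multiple q-zeta value ζ[k₁,…,k_d; r : q). -/
noncomputable def qZetaR {d : ℕ} (q : ℝ) (k : Fin d → ℕ) (r : ℕ) : ℝ :=
  ∑' m : {m : Fin (d + 1) → ℕ // StrictAnti m ∧ ∀ i, 0 < m i},
    (∏ i : Fin d, q ^ (m.1 i.castSucc * (k i - 1)) / (qint q (m.1 i.castSucc)) ^ (k i))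
      / (m.1 (Fin.last d) : ℝ) ^ r

/-- Multiple zeta value. -/
noncomputable def mzv {d : ℕ} (k : Fin d → ℕ) : ℝ :=
  ∑' m : {m : Fin d → ℕ // StrictAnti m ∧ ∀ i, 0 < m i},
    ∏ i, (1 : ℝ) / (m.1 i : ℝ) ^ (k i)

/-- Akhilesh's double tail of a multiple zeta value. -/
noncomputable def dtail {d : ℕ} (hd : 0 < d) (k : Fin d → ℕ) (p n : ℕ) : ℝ :=
  ∑' m : {m : Fin d → ℕ // StrictAnti m ∧ ∀ i, n < m i},
    ((Nat.choose (m.1 ⟨0, hd⟩ + p) p : ℝ))⁻¹ * ∏ i, (1 : ℝ) / (m.1 i : ℝ) ^ (k i)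




private noncomputable def auxF (q : ℝ) (c : ℕ) (x : ℝ) : ℝ := (q ^ x / (1 - q ^ x)) ^ c
private noncomputable def auxf (q : ℝ) (c : ℕ) (x : ℝ) : ℝ := (q ^ x) ^ c / (1 - q ^ x) ^ (c + 1)

private lemma aux_rpow_lt_one {q : ℝ} (hq0 : 0 < q) (hq1 : q < 1) {x : ℝ} (hx : 0 < x) :
    q ^ x < 1 := Real.rpow_lt_one hq0.le hq1 hx

private lemma auxf_pos {q : ℝ} (hq0 : 0 < q) (hq1 : q < 1) (c : ℕ) {x : ℝ} (hx : 0 < x) :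
    0 < auxf q c x := by
  have h1 := aux_rpow_lt_one hq0 hq1 hx
  have h2 := Real.rpow_pos_of_pos hq0 x
  apply div_pos (pow_pos h2 _) (pow_pos (by linarith) _)

private lemma auxf_anti {q : ℝ} (hq0 : 0 < q) (hq1 : q < 1) {c : ℕ} (hc : 1 ≤ c)
    {x y : ℝ} (hx : 0 < x) (hxy : x < y) : auxf q c y < auxf q c x := by
  have hy : 0 < y := hx.trans hxy
  have h1 : q ^ y < q ^ x := Real.rpow_lt_rpow_of_exponent_gt hq0 hq1 hxy
  have hx1 := aux_rpow_lt_one hq0 hq1 hx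
  have hy1 := aux_rpow_lt_one hq0 hq1 hy
  have hx0 := Real.rpow_pos_of_pos hq0 x
  have hy0 := Real.rpow_pos_of_pos hq0 y
  have h2 : (q ^ y) ^ c < (q ^ x) ^ c := pow_lt_pow_left₀ h1 hy0.le (by omega)
  have h3 : (1 - q ^ x) ^ (c+1) < (1 - q ^ y) ^ (c+1) :=
    pow_lt_pow_left₀ (by linarith) (by linarith) (by omega)
  have hDx : (0:ℝ) < (1 - q ^ x) ^ (c+1) := pow_pos (by linarith) _
  have hDy : (0:ℝ) < (1 - q ^ y) ^ (c+1) := pow_pos (by linarith) _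
  rw [auxf, auxf, div_lt_div_iff₀ hDy hDx]
  calc (q ^ y) ^ c * (1 - q ^ x) ^ (c+1) < (q ^ x) ^ c * (1 - q ^ x) ^ (c+1) :=
        mul_lt_mul_of_pos_right h2 hDx
    _ < (q ^ x) ^ c * (1 - q ^ y) ^ (c+1) :=
        mul_lt_mul_of_pos_left h3 (pow_pos hx0 _)

private lemma auxF_deriv {q : ℝ} (hq0 : 0 < q) (hq1 : q < 1) (c : ℕ) {x : ℝ} (hx : 0 < x) :
    HasDerivAt (auxF q c) ((c : ℝ) * Real.log q * auxf q c x) x := by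
  have hu : HasDerivAt (fun y : ℝ => q ^ y) (q ^ x * Real.log q) x :=
    (Real.hasStrictDerivAt_const_rpow hq0 x).hasDerivAt
  have hv : HasDerivAt (fun y : ℝ => 1 - q ^ y) (-(q ^ x * Real.log q)) x := by
    exact hu.const_sub 1
  have hx1 := aux_rpow_lt_one hq0 hq1 hx
  have hne : 1 - q ^ x ≠ 0 := by linarith
  have hd : HasDerivAt (auxF q c) ((c : ℝ) * (q ^ x / (1 - q ^ x)) ^ (c - 1) *
      ((q ^ x * Real.log q * (1 - q ^ x) - q ^ x * -(q ^ x * Real.log q)) / (1 - q ^ x) ^ 2)) x :=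
    ((hu.div hv hne).pow c)
  convert hd using 1
  rw [auxf]
  rcases Nat.eq_zero_or_pos c with hc0 | hc0
  · subst hc0; simp
  · obtain ⟨d, rfl⟩ : ∃ d, c = d + 1 := ⟨c - 1, by omega⟩
    have h2 : (q ^ x * Real.log q * (1 - q ^ x) - q ^ x * -(q ^ x * Real.log q)) /
        (1 - q ^ x) ^ 2 = Real.log q * q ^ x / (1 - q ^ x) ^ 2 := by ring
    rw [h2]
    simp only [Nat.add_sub_cancel]
    rw [div_pow]
    field_simp
    ring

private lemma auxF_step {q : ℝ} {c : ℕ} (hq0 : 0 < q) (hq1 : q < 1) (hc : 1 ≤ c) {m : ℕ} (hm : 1 ≤ m) :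
    (c : ℝ) * (-Real.log q) * auxf q c ((m:ℝ)+1) < auxF q c m - auxF q c ((m:ℝ)+1) ∧
    auxF q c m - auxF q c ((m:ℝ)+1) < (c : ℝ) * (-Real.log q) * auxf q c m := by
  have hm0 : (0:ℝ) < m := by exact_mod_cast hm
  have hlt : (m:ℝ) < (m:ℝ) + 1 := by linarith
  have hcont : ContinuousOn (auxF q c) (Set.Icc (m:ℝ) ((m:ℝ)+1)) := by
    intro x hx
    exact (auxF_deriv hq0 hq1 c (by rcases hx with ⟨h1, _⟩; linarith)).continuousAt.continuousWithinAt
  obtain ⟨ξ, hξ, hsl⟩ := exists_hasDerivAt_eq_slope (auxF q c)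
    (fun x => (c : ℝ) * Real.log q * auxf q c x) hlt hcont
    (fun x hx => auxF_deriv hq0 hq1 c (by rcases hx with ⟨h1, _⟩; linarith))
  have hξ0 : (0:ℝ) < ξ := by rcases hξ with ⟨h1, _⟩; linarith
  have heq : auxF q c m - auxF q c ((m:ℝ)+1) = (c:ℝ) * (-Real.log q) * auxf q c ξ := by
    have : (c : ℝ) * Real.log q * auxf q c ξ =
        (auxF q c ((m:ℝ)+1) - auxF q c m) / ((m:ℝ)+1 - m) := hsl
    rw [show ((m:ℝ)+1 - m) = 1 by ring, div_one] at this
    linarith [this]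
  have hL : (0:ℝ) < (c:ℝ) * (-Real.log q) := by
    have := Real.log_neg hq0 hq1
    have hc' : (0:ℝ) < c := by exact_mod_cast hc
    nlinarith
  constructor
  · rw [heq]
    exact mul_lt_mul_of_pos_left (auxf_anti hq0 hq1 hc hξ0 hξ.2) hL
  · rw [heq]
    exact mul_lt_mul_of_pos_left (auxf_anti hq0 hq1 hc hm0 hξ.1) hL

private lemma auxF_tendsto {q : ℝ} {c : ℕ} (hq0 : 0 < q) (hq1 : q < 1) (hc : 1 ≤ c) (a : ℕ) :
    Tendsto (fun N : ℕ => auxF q c ((a + N : ℕ) : ℝ)) atTop (𝓝 0) := by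
  have h1 : Tendsto (fun N : ℕ => (q : ℝ) ^ (a + N)) atTop (𝓝 0) := by
    have := (tendsto_pow_atTop_nhds_zero_of_lt_one hq0.le hq1).const_mul ((q:ℝ)^a)
    simpa [pow_add, mul_zero] using this
  have h2 : ContinuousAt (fun t : ℝ => (t / (1 - t)) ^ c) 0 := by
    apply ContinuousAt.pow
    exact ContinuousAt.div continuousAt_id (by fun_prop) (by norm_num)
  have h3 := h2.tendsto.comp h1
  simp only [Function.comp_def] at h3
  have h4 : ((0:ℝ) / (1 - 0)) ^ c = 0 := by
    rw [zero_div, zero_pow (by omega)]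
  rw [h4] at h3
  convert h3 using 2 with N
  simp [Function.comp, auxF, ← Nat.cast_add, Real.rpow_natCast]

private lemma aux_telescope {G : ℕ → ℝ} (a : ℕ) (hmono : ∀ j, G (a + j + 1) ≤ G (a + j))
    (hlim : Tendsto (fun N => G (a + N)) atTop (𝓝 0)) :
    HasSum (fun j => G (a + j) - G (a + j + 1)) (G a) := by
  rw [hasSum_iff_tendsto_nat_of_nonneg (fun j => sub_nonneg.2 (hmono j))]
  have hps : ∀ N, ∑ j ∈ Finset.range N, (G (a + j) - G (a + j + 1)) = G a - G (a + N) := by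
    intro N
    simpa [add_assoc] using Finset.sum_range_sub' (fun j => G (a + j)) N
  simp only [hps]
  simpa using tendsto_const_nhds.sub hlim

theorem stmt14 (k₁ n : ℕ) (hk : 2 ≤ k₁) (hn : 1 ≤ n) (q : ℝ)
    (hq : q ∈ Set.Ioo (0:ℝ) 1) :
    (q - 1) / Real.log q * (q ^ (n + 1) / qint q (n + 1)) ^ (k₁ - 1) / ((k₁ : ℝ) - 1)
        < qZeta q (fun _ : Fin 1 => k₁) n ∧
    qZeta q (fun _ : Fin 1 => k₁) n
        < (q - 1) / Real.log q * (q ^ n / qint q n) ^ (k₁ - 1) / ((k₁ : ℝ) - 1) := by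
  obtain ⟨hq0, hq1⟩ := hq
  obtain ⟨c, rfl⟩ : ∃ c, k₁ = c + 1 := ⟨k₁ - 1, by omega⟩
  have hc : 1 ≤ c := by omega
  have hlq : Real.log q < 0 := Real.log_neg hq0 hq1
  have h1q : (0:ℝ) < 1 - q := by linarith
  set B : ℝ := (1 - q) ^ (c + 1) with hB
  set L : ℝ := (c : ℝ) * (-Real.log q) with hL
  have hBpos : 0 < B := pow_pos h1q _
  have hLpos : 0 < L := by
    have hc' : (0:ℝ) < c := by exact_mod_cast hc
    rw [hL]; nlinarith
  set G : ℕ → ℝ := fun m => auxF q c (m:ℝ) with hG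
  -- summand identity
  have hsummand : ∀ m : ℕ, 1 ≤ m →
      q ^ (m * c) / qint q m ^ (c + 1) = B * auxf q c (m:ℝ) := by
    intro m hm
    have h1 : q ^ m < 1 := pow_lt_one₀ hq0.le hq1 (by omega)
    have h1' : (0:ℝ) < 1 - q ^ m := by linarith
    rw [auxf, Real.rpow_natCast, qint, hB, div_pow, pow_mul]
    rw [div_div_eq_mul_div]
    field_simp
  -- step inequalities for G
  have hstep : ∀ m : ℕ, 1 ≤ m →
      L * auxf q c ((m+1:ℕ):ℝ) < G m - G (m+1) ∧
      G m - G (m+1) < L * auxf q c (m:ℝ) := by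
    intro m hm
    have h := auxF_step hq0 hq1 hc hm
    have hcast : ((m+1:ℕ):ℝ) = (m:ℝ)+1 := by push_cast; ring
    constructor
    · have := h.1; rw [hG]; simp only [hcast]; exact this
    · have := h.2; rw [hG]; simp only [hcast]; exact this
  have hGpos : ∀ m : ℕ, 1 ≤ m → 0 < auxf q c (m:ℝ) := by
    intro m hm; exact auxf_pos hq0 hq1 c (by exact_mod_cast hm)
  -- telescoping sums
  have hT0 : HasSum (fun j => G (n + j) - G (n + j + 1)) (G n) := by
    apply aux_telescope n
    · intro j
      have h := (hstep (n + j) (by omega)).1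
      have hp := hGpos (n + j + 1) (by omega)
      nlinarith
    · exact auxF_tendsto hq0 hq1 hc n
  have hT1 : HasSum (fun j => G (n + 1 + j) - G (n + 1 + j + 1)) (G (n+1)) := by
    apply aux_telescope (n+1)
    · intro j
      have h := (hstep (n + 1 + j) (by omega)).1
      have hp := hGpos (n + 1 + j + 1) (by omega)
      nlinarith
    · exact auxF_tendsto hq0 hq1 hc (n+1)
  -- comparisons
  have hcmp1 : ∀ j : ℕ, G (n + 1 + j) - G (n + 1 + j + 1) < L * auxf q c ((n+1+j:ℕ):ℝ) :=
    fun j => (hstep (n + 1 + j) (by omega)).2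
  have hcmp0 : ∀ j : ℕ, L * auxf q c ((n+1+j:ℕ):ℝ) < G (n + j) - G (n + j + 1) := by
    intro j
    have h := (hstep (n + j) (by omega)).1
    have : ((n + j + 1 : ℕ):ℝ) = ((n + 1 + j : ℕ):ℝ) := by push_cast; ring
    rwa [this] at h
  have hS'nonneg : ∀ j : ℕ, 0 ≤ L * auxf q c ((n+1+j:ℕ):ℝ) :=
    fun j => le_of_lt (mul_pos hLpos (hGpos (n+1+j) (by omega)))
  have hS'sum : Summable (fun j => L * auxf q c ((n+1+j:ℕ):ℝ)) :=
    Summable.of_nonneg_of_le hS'nonneg (fun j => (hcmp0 j).le) hT0.summable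
  -- strict tsum bounds
  have hlow : G (n+1) < ∑' j : ℕ, L * auxf q c ((n+1+j:ℕ):ℝ) := by
    rw [← hT1.tsum_eq]
    apply Summable.tsum_lt_tsum_of_nonneg (i := 0)
    · intro j
      have := (hstep (n + 1 + j) (by omega)).1
      have hp := hGpos (n + 1 + j + 1) (by omega)
      nlinarith
    · exact fun j => (hcmp1 j).le
    · exact hcmp1 0
    · exact hS'sum
  have hup : (∑' j : ℕ, L * auxf q c ((n+1+j:ℕ):ℝ)) < G n := by
    rw [← hT0.tsum_eq]
    exact Summable.tsum_lt_tsum_of_nonneg hS'nonneg (fun j => (hcmp0 j).le) (hcmp0 0) hT0.summable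
  -- rewrite qZeta
  have hzeta : qZeta q (fun _ : Fin 1 => c + 1) n = ∑' j : ℕ, B * auxf q c ((n+1+j : ℕ) : ℝ) := by
    rw [qZeta]
    let e : ℕ ≃ {m : Fin 1 → ℕ // StrictAnti m ∧ ∀ i, n < m i} :=
      { toFun := fun j => ⟨fun _ => n + 1 + j,
          fun i j' h => absurd (Subsingleton.elim i j' ▸ h) (lt_irrefl _),
          fun _ => by show n < n + 1 + j; omega⟩
        invFun := fun m => m.1 0 - (n+1)
        left_inv := fun j => by simp
        right_inv := fun m => by
          apply Subtype.ext
          funext i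
          have h0 := m.2.2 i
          have hi : i = 0 := Subsingleton.elim i 0
          subst hi
          simp only
          omega }
    rw [← Equiv.tsum_eq e]
    apply tsum_congr
    intro j
    rw [show (e j).1 = fun _ : Fin 1 => n + 1 + j from rfl]
    simp only [Nat.add_sub_cancel]
    rw [Fin.prod_univ_one]
    exact hsummand (n+1+j) (by omega)
  have htsum : qZeta q (fun _ : Fin 1 => c + 1) n = (B / L) * ∑' j : ℕ, L * auxf q c ((n+1+j : ℕ) : ℝ) := by
    rw [hzeta, tsum_mul_left, tsum_mul_left, ← mul_assoc, div_mul_cancel₀]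
    exact hLpos.ne'
  -- bound identity
  have hbound : ∀ m : ℕ, 1 ≤ m →
      (q - 1) / Real.log q * (q ^ m / qint q m) ^ ((c + 1) - 1) / (((c:ℝ) + 1) - 1)
        = B * G m / L := by
    intro m hm
    have h1 : q ^ m < 1 := pow_lt_one₀ hq0.le hq1 (by omega)
    have h1' : (0:ℝ) < 1 - q ^ m := by linarith
    have hc' : (0:ℝ) < c := by exact_mod_cast hc
    rw [hG]
    simp only [Nat.add_sub_cancel]
    rw [auxF, Real.rpow_natCast, qint, hB, hL]
    rw [div_div_eq_mul_div, div_pow, div_pow, mul_pow, ← pow_mul]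
    rw [add_sub_cancel_right]
    field_simp
    ring
  have hcast : ((c:ℝ) + 1) - 1 = (((c+1:ℕ):ℝ) - 1) := by push_cast; ring
  constructor
  · have hb := hbound (n+1) (by omega)
    rw [← hcast]
    push_cast at hb ⊢
    rw [hb, htsum]
    rw [div_mul_eq_mul_div, div_lt_div_iff₀ hLpos hLpos]
    have := mul_lt_mul_of_pos_left hlow hBpos
    nlinarith
  · have hb := hbound n hn
    rw [← hcast]
    push_cast at hb ⊢
    rw [hb, htsum]
    rw [div_mul_eq_mul_div, div_lt_div_iff₀ hLpos hLpos]
    have := mul_lt_mul_of_pos_left hup hBpos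
    nlinarith
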